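/- The set M_φ := {x ∈ X : there exist w ≠ x and y ≠ x with (w,x) ∈ Γ_φ and (x,y) ∈ Γ_φ} is σ-compact. -/
import Mathlib


/-- The set `M_φ` of points lying in the (relative) interior of some non-degenerate
transport ray, i.e. admitting `w ≠ x` and `y ≠ x` with `(w,x), (x,y) ∈ Γ_φ`,
is σ-compact. -/
theorem stmt_2 {X : Type*} [TopologicalSpace X] [TopologicalSpace.MetrizableSpace X]
    [SigmaCompactSpace X]
    (d : X → X → ℝ)
    (hd_nonneg : ∀ x y, 0 ≤ d x y)
    (hd_refl : ∀ x, d x x = 0)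
    (hd_tri : ∀ x y z, d x y ≤ d x z + d z y)
    (hd_cont : Continuous fun p : X × X => d p.1 p.2)
    (hd_pos : ∀ x y, d x y = 0 → x = y)
    (φ : X → ℝ) (hφ : ∀ x y, φ y - φ x ≤ d x y) :
    IsSigmaCompact {x : X | ∃ w y : X, w ≠ x ∧ y ≠ x ∧
      φ x - φ w = d w x ∧ φ y - φ x = d x y} := by
  -- φ is continuous
  have hφc : Continuous φ := by
    rw [continuous_iff_continuousAt]
    intro x
    have h1 : Filter.Tendsto (fun y => φ x - d y x) (nhds x) (nhds (φ x)) := by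
      have : Filter.Tendsto (fun y => d y x) (nhds x) (nhds 0) := by
        have hc : Continuous fun y : X => d y x :=
          hd_cont.comp (continuous_id.prodMk continuous_const)
        simpa [hd_refl] using hc.tendsto x
      simpa using tendsto_const_nhds.sub this
    have h2 : Filter.Tendsto (fun y => φ x + d x y) (nhds x) (nhds (φ x)) := by
      have : Filter.Tendsto (fun y => d x y) (nhds x) (nhds 0) := by
        have hc : Continuous fun y : X => d x y :=
          hd_cont.comp (continuous_const.prodMk continuous_id)
        simpa [hd_refl] using hc.tendsto x
      simpa using tendsto_const_nhds.add this
    exact tendsto_of_tendsto_of_tendsto_of_le_of_le h1 h2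
      (fun y => by linarith [hφ y x]) (fun y => by linarith [hφ x y])
  set K : ℕ → Set X := compactCovering X with hK
  -- the compact pieces
  set T : ℕ × ℕ → Set (X × X × X) := fun p =>
    {q | (q.1 ∈ K p.2 ∧ q.2.1 ∈ K p.2 ∧ q.2.2 ∈ K p.2) ∧
      1 / (p.1 + 1 : ℝ) ≤ d q.1 q.2.1 ∧ 1 / (p.1 + 1 : ℝ) ≤ d q.2.1 q.2.2 ∧
      φ q.2.1 - φ q.1 = d q.1 q.2.1 ∧ φ q.2.2 - φ q.2.1 = d q.2.1 q.2.2} with hT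
  set C : ℕ × ℕ → Set X := fun p => (fun q : X × X × X => q.2.1) '' T p with hC
  have hd1 : Continuous fun q : X × X × X => d q.1 q.2.1 :=
    hd_cont.comp (continuous_fst.prodMk continuous_snd.fst)
  have hd2 : Continuous fun q : X × X × X => d q.2.1 q.2.2 :=
    hd_cont.comp ((continuous_fst.comp continuous_snd).prodMk
      (continuous_snd.comp continuous_snd))
  have hTc : ∀ p, IsCompact (T p) := by
    intro p
    have hbox : IsCompact (K p.2 ×ˢ (K p.2 ×ˢ K p.2)) :=
      (isCompact_compactCovering X p.2).prod
        ((isCompact_compactCovering X p.2).prod (isCompact_compactCovering X p.2))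
    have hclosed : IsClosed {q : X × X × X |
        1 / (p.1 + 1 : ℝ) ≤ d q.1 q.2.1 ∧ 1 / (p.1 + 1 : ℝ) ≤ d q.2.1 q.2.2 ∧
        φ q.2.1 - φ q.1 = d q.1 q.2.1 ∧ φ q.2.2 - φ q.2.1 = d q.2.1 q.2.2} := by
      apply IsClosed.inter (isClosed_le continuous_const hd1)
      apply IsClosed.inter (isClosed_le continuous_const hd2)
      apply IsClosed.inter
      · exact isClosed_eq (((hφc.comp continuous_snd.fst).sub
          (hφc.comp continuous_fst))) hd1
      · exact isClosed_eq (((hφc.comp continuous_snd.snd).sub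
          (hφc.comp continuous_snd.fst))) hd2
    have : T p = (K p.2 ×ˢ (K p.2 ×ˢ K p.2)) ∩ _ := rfl
    rw [this]
    exact hbox.inter_right hclosed
  have hCc : ∀ p, IsCompact (C p) := fun p =>
    (hTc p).image continuous_snd.fst
  have key : {x : X | ∃ w y : X, w ≠ x ∧ y ≠ x ∧
      φ x - φ w = d w x ∧ φ y - φ x = d x y} = ⋃ p, C p := by
    ext x
    simp only [Set.mem_setOf_eq, Set.mem_iUnion]
    constructor
    · rintro ⟨w, y, hw, hy, h1, h2⟩
      have hdw : 0 < d w x := by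
        rcases lt_or_eq_of_le (hd_nonneg w x) with h | h
        · exact h
        · exact absurd (hd_pos w x h.symm) hw
      have hdy : 0 < d x y := by
        rcases lt_or_eq_of_le (hd_nonneg x y) with h | h
        · exact h
        · exact absurd (hd_pos x y h.symm) (fun e => hy e.symm)
      obtain ⟨n, hn⟩ := exists_nat_one_div_lt (lt_min hdw hdy)
      obtain ⟨mw, hmw⟩ := Set.iUnion_eq_univ_iff.mp (iUnion_compactCovering X) w
      obtain ⟨mx, hmx⟩ := Set.iUnion_eq_univ_iff.mp (iUnion_compactCovering X) x
      obtain ⟨my, hmy⟩ := Set.iUnion_eq_univ_iff.mp (iUnion_compactCovering X) y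
      set m := max mw (max mx my)
      refine ⟨(n, m), ⟨(w, x, y), ⟨⟨?_, ?_, ?_⟩, ?_, ?_, h1, h2⟩, rfl⟩⟩
      · exact compactCovering_subset X (le_max_left _ _) hmw
      · exact compactCovering_subset X (le_trans (le_max_left _ _) (le_max_right _ _)) hmx
      · exact compactCovering_subset X (le_trans (le_max_right _ _) (le_max_right _ _)) hmy
      · exact le_of_lt (lt_of_lt_of_le hn (min_le_left _ _))
      · exact le_of_lt (lt_of_lt_of_le hn (min_le_right _ _))
    · rintro ⟨p, ⟨⟨w, x', y⟩, ⟨⟨_, _, _⟩, hge1, hge2, h1, h2⟩, rfl⟩⟩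
      have hpos : (0 : ℝ) < 1 / (p.1 + 1 : ℝ) := by positivity
      refine ⟨w, y, ?_, ?_, h1, h2⟩
      · intro e; rw [e] at hge1; rw [hd_refl] at hge1; linarith
      · intro e; rw [e] at hge2; rw [hd_refl] at hge2; linarith
  rw [key]
  exact isSigmaCompact_iUnion_of_isCompact C hCc
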